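/- If F ⊆ H are faces of the reduced no broken circuit complex of a matroid M, then L(H) \ H ⊆ L(F) \ F, where L(·) denotes the ≺-lexicographically maximal basis containing the given independent set. -/

import Mathlib

open Set

/-- A circuit of a matroid: a minimal dependent set. -/
def Matroid.IsCircuit' {α : Type*} (M : Matroid α) (C : Set α) : Prop :=
  M.Dep C ∧ ∀ D ⊂ C, M.Indep D

/-- A broken circuit: a circuit with its least element (in the natural order) removed. -/
def Matroid.IsBrokenCircuit {n : ℕ} (M : Matroid (Fin (n + 1))) (B : Set (Fin (n + 1))) : Prop :=
  ∃ C m, M.IsCircuit' C ∧ m ∈ C ∧ (∀ k ∈ C, m ≤ k) ∧ B = C \ {m}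

/-- The rank of a set in a matroid: the largest size of an independent subset. -/
noncomputable def Matroid.rk' {α : Type*} (M : Matroid α) (S : Set α) : ℕ :=
  sSup {k | ∃ I, I ⊆ S ∧ M.Indep I ∧ I.ncard = k}

/-- A face of the reduced no broken circuit complex: a subset of `{1,…,n}` containing
no broken circuit (such a set is automatically independent). -/
def RNBCface {n : ℕ} (M : Matroid (Fin (n + 1))) (F : Set (Fin (n + 1))) : Prop :=
  (0 : Fin (n + 1)) ∉ F ∧ (∀ B, M.IsBrokenCircuit B → ¬ B ⊆ F) ∧ M.Indep F

/-- The up-set `i↑` of `i` with respect to a second linear order `≺` (including `i` itself). -/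
def upSet {n : ℕ} (prec : LinearOrder (Fin (n + 1))) (i : Fin (n + 1)) : Set (Fin (n + 1)) :=
  {j | prec.le i j}

/-- `L(F)`: the candidate `≺`-lexicographically maximal basis containing `F`, defined by
`i ∈ L(F)` iff `i ∈ F` or `rk(i↑ ∪ F) > rk((i↑ \ {i}) ∪ F)`. -/
noncomputable def LSet {n : ℕ} (M : Matroid (Fin (n + 1))) (prec : LinearOrder (Fin (n + 1)))
    (F : Set (Fin (n + 1))) : Set (Fin (n + 1)) :=
  {i | i ∈ F ∨ M.rk' (upSet prec i ∪ F) > M.rk' ((upSet prec i \ {i}) ∪ F)}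

/-- The facet `F̄` of the extended no broken circuit complex attached to a face `F` of the
reduced no broken circuit complex:  `{y_i : i ∈ F} ∪ {x_j : j ∈ L(F) \ F} ∪ {y_0}`,
with `x`-vertices encoded by `Sum.inl` and `y`-vertices by `Sum.inr`. -/
noncomputable def barFace {n : ℕ} (M : Matroid (Fin (n + 1))) (prec : LinearOrder (Fin (n + 1)))
    (F : Set (Fin (n + 1))) : Set (Fin (n + 1) ⊕ Fin (n + 1)) :=
  (Sum.inr '' F) ∪ (Sum.inl '' (LSet M prec F \ F)) ∪ {Sum.inr 0}

/-- A face of the extended no broken circuit complex `Δ^ENBC_{M,≺}`: a subset of some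
facet `F̄`. -/
noncomputable def ENBCface {n : ℕ} (M : Matroid (Fin (n + 1))) (prec : LinearOrder (Fin (n + 1)))
    (G : Set (Fin (n + 1) ⊕ Fin (n + 1))) : Prop :=
  ∃ F, RNBCface M F ∧ G ⊆ barFace M prec F

lemma rk'_eq_ncard_of_basis {n : ℕ} {M : Matroid (Fin (n + 1))} {I X : Set (Fin (n + 1))}
    (hIX : M.IsBasis I X) : M.rk' X = I.ncard := by
  have hfin : ∀ S : Set (Fin (n + 1)), S.Finite := fun S => S.toFinite
  apply le_antisymm
  · refine csSup_le ⟨0, ∅, empty_subset X, M.empty_indep, by simp⟩ ?_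
    rintro k ⟨J, hJX, hJ, rfl⟩
    obtain ⟨J', hJ', hJJ'⟩ := hJ.subset_isBasis_of_subset hJX hIX.subset_ground
    have h1 : J.ncard ≤ J'.ncard := Set.ncard_le_ncard hJJ' (hfin J')
    have h2 : J'.encard = I.encard := hJ'.encard_eq_encard hIX
    have h3 : J'.ncard = I.ncard := by
      rw [Set.ncard, Set.ncard, h2]
    omega
  · apply le_csSup
    · refine ⟨n + 1, ?_⟩
      rintro k ⟨J, _, _, rfl⟩
      have := Set.ncard_le_ncard (Set.subset_univ J) (Set.toFinite _)
      rwa [Set.ncard_univ, Nat.card_eq_fintype_card, Fintype.card_fin] at this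
    · exact ⟨I, hIX.subset, hIX.indep, rfl⟩

lemma rk'_insert_gt_iff {n : ℕ} {M : Matroid (Fin (n + 1))} (hE : M.E = Set.univ)
    (X : Set (Fin (n + 1))) (i : Fin (n + 1)) :
    M.rk' (insert i X) > M.rk' X ↔ i ∉ M.closure X := by
  have hXE : X ⊆ M.E := by rw [hE]; exact Set.subset_univ X
  obtain ⟨I, hI⟩ := M.exists_isBasis X hXE
  constructor
  · intro h hicl
    have hIbasis : M.IsBasis I (insert i X) := by
      refine hI.indep.isBasis_of_subset_of_subset_closure
        (hI.subset.trans (Set.subset_insert i X)) ?_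
      rw [hI.closure_eq_closure]
      exact Set.insert_subset hicl (M.subset_closure X hXE)
    rw [rk'_eq_ncard_of_basis hI, rk'_eq_ncard_of_basis hIbasis] at h
    omega
  · intro hicl
    have hicl' : i ∉ M.closure I := by rwa [hI.closure_eq_closure]
    have hiI : i ∉ I := fun h => hicl' (M.subset_closure I hI.indep.subset_ground h)
    have hins : M.Indep (insert i I) := by
      rw [hI.indep.insert_indep_iff_of_notMem hiI]
      exact ⟨by rw [hE]; trivial, hicl'⟩
    have hle : I.ncard + 1 ≤ M.rk' (insert i X) := by
      have hcard : (insert i I).ncard = I.ncard + 1 := Set.ncard_insert_of_notMem hiI I.toFinite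
      apply le_csSup
      · refine ⟨n + 1, ?_⟩
        rintro k ⟨J, _, _, rfl⟩
        have := Set.ncard_le_ncard (Set.subset_univ J) (Set.toFinite _)
        rwa [Set.ncard_univ, Nat.card_eq_fintype_card, Fintype.card_fin] at this
      · exact ⟨insert i I, Set.insert_subset_insert hI.subset, hins, hcard⟩
    rw [rk'_eq_ncard_of_basis hI]
    omega

/-- if `F ⊆ H` are faces of the reduced no broken circuit complex then
`L(H) \ H ⊆ L(F) \ F`. -/
theorem LSet_antitone {n : ℕ} (M : Matroid (Fin (n + 1)))
    (prec : LinearOrder (Fin (n + 1)))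
    (hE : M.E = Set.univ)
    (hsimple : ∀ e f : Fin (n + 1), e ≠ f → M.Indep {e, f})
    (hloopless : ∀ e : Fin (n + 1), M.Indep {e})
    (F H : Set (Fin (n + 1))) (hF : RNBCface M F) (hH : RNBCface M H)
    (hFH : F ⊆ H) :
    LSet M prec H \ H ⊆ LSet M prec F \ F := by
  rintro i ⟨hiL, hiH⟩
  have hiF : i ∉ F := fun h => hiH (hFH h)
  have hrkH : M.rk' (upSet prec i ∪ H) > M.rk' ((upSet prec i \ {i}) ∪ H) := by
    rcases hiL with h | h
    · exact absurd h hiH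
    · exact h
  have hins : ∀ S : Set (Fin (n + 1)),
      upSet prec i ∪ S = insert i ((upSet prec i \ {i}) ∪ S) := by
    intro S
    have : insert i (upSet prec i \ {i}) = upSet prec i := by
      apply Set.insert_diff_singleton.trans
      exact Set.insert_eq_self.mpr (prec.le_refl i)
    rw [← Set.insert_union, this]
  rw [hins] at hrkH
  rw [rk'_insert_gt_iff hE] at hrkH
  have hsub : (upSet prec i \ {i}) ∪ F ⊆ (upSet prec i \ {i}) ∪ H :=
    Set.union_subset_union_right _ hFH
  have hiclF : i ∉ M.closure ((upSet prec i \ {i}) ∪ F) :=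
    fun h => hrkH (M.closure_subset_closure hsub h)
  refine ⟨Or.inr ?_, hiF⟩
  rw [hins, rk'_insert_gt_iff hE]
  exact hiclF
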